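/- Let x* be the unique real root of the cubic x³ + x² + x − 1 and consider the planar vector field F(x,y) = (1 − x − x² − x³ − 2xy, −y − y² − x² y). Then (x*, 0) is an equilibrium of F, the Jacobian matrix of F at (x*, 0) is upper triangular with diagonal entries −1 − 2x* − 3x*² and −1 − x*², and both of these eigenvalues are negative; hence (x*, 0) is a hyperbolic stable node. -/

import Mathlib

/-- Let `x*` be the unique real root of `x³ + x² + x − 1` and
`F(x,y) = (1 − x − x² − x³ − 2xy, −y − y² − x²y)`. Then `(x*, 0)` is an equilibrium of
`F`, the Jacobian of `F` at `(x*, 0)` is upper triangular with diagonal entries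
`−1 − 2x* − 3x*²` and `−1 − x*²`, both negative; hence `(x*, 0)` is a hyperbolic stable
node. -/
theorem infinite_equilibrium_stable_node
    (x : ℝ) (hroot : x ^ 3 + x ^ 2 + x - 1 = 0)
    (huniq : ∀ x' : ℝ, x' ^ 3 + x' ^ 2 + x' - 1 = 0 → x' = x)
    (F : ℝ × ℝ → ℝ × ℝ)
    (hF : ∀ p : ℝ × ℝ, F p = (1 - p.1 - p.1 ^ 2 - p.1 ^ 3 - 2 * p.1 * p.2,
      -p.2 - p.2 ^ 2 - p.1 ^ 2 * p.2)) :
    F (x, 0) = (0, 0) ∧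
    (∃ L : ℝ × ℝ →L[ℝ] ℝ × ℝ, HasFDerivAt F L (x, 0) ∧
      (∀ a b : ℝ, L (a, b) = ((-1 - 2 * x - 3 * x ^ 2) * a + (-2 * x) * b,
        (-1 - x ^ 2) * b))) ∧
    -1 - 2 * x - 3 * x ^ 2 < 0 ∧ -1 - x ^ 2 < 0 := by
  have hFeq : F = fun p : ℝ × ℝ => (1 - p.1 - p.1 ^ 2 - p.1 ^ 3 - 2 * p.1 * p.2,
      -p.2 - p.2 ^ 2 - p.1 ^ 2 * p.2) := funext hF
  refine ⟨?_, ?_, by nlinarith [sq_nonneg x, sq_nonneg (x + 1)], by nlinarith [sq_nonneg x]⟩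
  · rw [hF]; simp only [Prod.mk.injEq]
    constructor
    · nlinarith [hroot]
    · ring
  · set fst := ContinuousLinearMap.fst ℝ ℝ ℝ
    set snd := ContinuousLinearMap.snd ℝ ℝ ℝ
    have hx : HasFDerivAt (fun p : ℝ × ℝ => p.1) fst ((x, 0) : ℝ × ℝ) := hasFDerivAt_fst
    have hy : HasFDerivAt (fun p : ℝ × ℝ => p.2) snd ((x, 0) : ℝ × ℝ) := hasFDerivAt_snd
    have hd1 : HasFDerivAt (fun p : ℝ × ℝ => 1 - p.1 - p.1 ^ 2 - p.1 ^ 3 - 2 * p.1 * p.2)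
        ((((0 - fst) - ((2 : ℕ) * x ^ 1) • fst) - ((3 : ℕ) * x ^ 2) • fst) -
          ((2 * x) • snd + (0 : ℝ) • ((2 : ℝ) • fst)))
        ((x, 0) : ℝ × ℝ) := by
      exact ((((hasFDerivAt_const (1 : ℝ) _).sub hx).sub (((hasDerivAt_pow 2 x).comp_hasFDerivAt ((x, 0) : ℝ × ℝ) hx))).sub (((hasDerivAt_pow 3 x).comp_hasFDerivAt ((x, 0) : ℝ × ℝ) hx))).sub
        ((hx.const_mul 2).mul hy)
    have hd2 : HasFDerivAt (fun p : ℝ × ℝ => -p.2 - p.2 ^ 2 - p.1 ^ 2 * p.2)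
        (((-snd) - ((2 : ℕ) * (0 : ℝ) ^ 1) • snd) - ((x ^ 2) • snd + (0 : ℝ) • (((2 : ℕ) * x ^ 1) • fst)))
        ((x, 0) : ℝ × ℝ) := by
      exact ((hy.neg).sub (((hasDerivAt_pow 2 (0:ℝ)).comp_hasFDerivAt ((x, 0) : ℝ × ℝ) hy))).sub ((((hasDerivAt_pow 2 x).comp_hasFDerivAt ((x, 0) : ℝ × ℝ) hx)).mul hy)
    refine ⟨_, hFeq ▸ HasFDerivAt.prodMk hd1 hd2, ?_⟩
    intro a b
    simp [fst, snd, ContinuousLinearMap.prod_apply]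
    constructor <;> ring
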